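/- Poincaré/Bonferroni bound used in the lower bound: let V_0, …, V_{N-1} be events such that each V_k = Z_k ∩ W_k where W_0,…,W_{N-1} and any intersection of Z_k's are independent of the W's, P(W_k) = e^{-F} for all k, and for all ℓ ≥ 2 and k₁<…<k_ℓ, P(Z_{k₁} ∩ … ∩ Z_{k_ℓ}) ≤ e^{T - E}·e^{-ℓT} for constants E ≥ T ≥ 0, F ≥ 0. Then |P(∪ V_k) - ∑ P(V_k)| ≤ e^{T-E}·((1 + e^{-(F+T)})^N - 1 - N e^{-(F+T)}) ≤ (N²/2)·e^{T-E}·e^{-2(F+T)}·e^{N e^{-(F+T)}}. -/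

import Mathlib

open MeasureTheory Finset

lemma bonferroni_aux {Ω ι : Type*} [MeasurableSpace Ω] [DecidableEq ι] (P : Measure Ω)
    (A : ι → Set Ω) (hA : ∀ k, MeasurableSet (A k)) (s : Finset ι) :
    ∑ k ∈ s, P (A k) ≤ P (⋃ k ∈ s, A k) + ∑ t ∈ s.powersetCard 2, P (⋂ k ∈ t, A k) := by
  induction s using Finset.induction with
  | empty => simp
  | @insert a s ha ih =>
    have hU : MeasurableSet (⋃ k ∈ s, A k) :=
      MeasurableSet.biUnion s.countable_toSet (fun k _ => hA k)
    have key : P (A a) + P (⋃ k ∈ s, A k)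
        = P (A a ∪ ⋃ k ∈ s, A k) + P (A a ∩ ⋃ k ∈ s, A k) :=
      (measure_union_add_inter (A a) hU).symm
    have hsub : P (A a ∩ ⋃ k ∈ s, A k) ≤ ∑ k ∈ s, P (A a ∩ A k) := by
      rw [Set.inter_iUnion₂]
      exact measure_biUnion_finset_le s _
    have hdisj : Disjoint (s.powersetCard 2) ((s.powersetCard 1).image (insert a)) := by
      rw [Finset.disjoint_left]
      intro t ht ht'
      obtain ⟨u, hu, rfl⟩ := Finset.mem_image.1 ht'
      have : insert a u ⊆ s := (Finset.mem_powersetCard.1 ht).1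
      exact ha (this (Finset.mem_insert_self a u))
    have hpair : ∑ t ∈ (insert a s).powersetCard 2, P (⋂ k ∈ t, A k)
        = ∑ t ∈ s.powersetCard 2, P (⋂ k ∈ t, A k) + ∑ k ∈ s, P (A a ∩ A k) := by
      rw [show (2:ℕ) = Nat.succ 1 from rfl, Finset.powersetCard_succ_insert ha 1,
        Finset.sum_union hdisj]
      congr 1
      rw [Finset.sum_image]
      · rw [Finset.powersetCard_one, Finset.sum_map]
        refine Finset.sum_congr rfl fun k hk => ?_
        simp
      · intro x hx y hy hxy
        have hax : a ∉ x := fun h => ha ((Finset.mem_powersetCard.1 hx).1 h)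
        have hay : a ∉ y := fun h => ha ((Finset.mem_powersetCard.1 hy).1 h)
        rw [← Finset.erase_insert hax, ← Finset.erase_insert hay, hxy]
    calc ∑ k ∈ insert a s, P (A k) = P (A a) + ∑ k ∈ s, P (A k) :=
          Finset.sum_insert ha
      _ ≤ P (A a) + (P (⋃ k ∈ s, A k) + ∑ t ∈ s.powersetCard 2, P (⋂ k ∈ t, A k)) :=
          add_le_add_right ih _
      _ = (P (A a) + P (⋃ k ∈ s, A k)) + ∑ t ∈ s.powersetCard 2, P (⋂ k ∈ t, A k) := by ring
      _ = (P (A a ∪ ⋃ k ∈ s, A k) + P (A a ∩ ⋃ k ∈ s, A k))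
            + ∑ t ∈ s.powersetCard 2, P (⋂ k ∈ t, A k) := by rw [key]
      _ ≤ (P (A a ∪ ⋃ k ∈ s, A k) + ∑ k ∈ s, P (A a ∩ A k))
            + ∑ t ∈ s.powersetCard 2, P (⋂ k ∈ t, A k) :=
          add_le_add_left (add_le_add_right hsub _) _
      _ = P (⋃ k ∈ insert a s, A k) + ∑ t ∈ (insert a s).powersetCard 2, P (⋂ k ∈ t, A k) := by
          rw [hpair, Finset.set_biUnion_insert]; ring

lemma choose_two_le_pow (N : ℕ) {x : ℝ} (hx : 0 ≤ x) :
    (N.choose 2 : ℝ) * x^2 ≤ (1+x)^N - 1 - N*x := by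
  induction N with
  | zero => simp
  | succ N ih =>
    have hid : (1+x)^(N+1) - 1 - (N+1:ℕ)*x
        = (1+x)*((1+x)^N - 1 - N*x) + N*x^2 := by push_cast; ring
    have hch : ((N+1).choose 2 : ℝ) = N.choose 2 + N := by
      rw [Nat.choose_succ_succ]; push_cast [Nat.choose_one_right]; ring
    have hf0 : (0:ℝ) ≤ (1+x)^N - 1 - N*x := le_trans (by positivity) ih
    nlinarith [ih, mul_nonneg hx hf0, sq_nonneg x, (Nat.cast_nonneg N : (0:ℝ) ≤ (N:ℝ))]

lemma pow_sub_le_exp (N : ℕ) {x : ℝ} (hx : 0 ≤ x) :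
    (1+x)^N - 1 - N*x ≤ ((N:ℝ)^2/2) * x^2 * Real.exp (N*x) := by
  induction N with
  | zero => simp
  | succ N ih =>
    have hid : (1+x)^(N+1) - 1 - (N+1:ℕ)*x
        = (1+x)*((1+x)^N - 1 - N*x) + N*x^2 := by push_cast; ring
    have hf0 : (0:ℝ) ≤ (1+x)^N - 1 - N*x := by
      have := choose_two_le_pow N hx
      nlinarith [(Nat.cast_nonneg (N.choose 2) : (0:ℝ) ≤ (N.choose 2:ℝ)), sq_nonneg x]
    have h1x : (1:ℝ)+x ≤ Real.exp x := by linarith [Real.add_one_le_exp x]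
    have hexp : Real.exp x * Real.exp ((N:ℝ)*x) = Real.exp ((N+1:ℕ)*x) := by
      rw [← Real.exp_add]; push_cast; ring_nf
    have hexp1 : (1:ℝ) ≤ Real.exp ((N+1:ℕ)*x) := by
      exact Real.one_le_exp (by positivity)
    have hexpN : (0:ℝ) ≤ Real.exp ((N:ℝ)*x) := (Real.exp_pos _).le
    rw [hid]
    have step1 : (1+x)*((1+x)^N - 1 - N*x) ≤ Real.exp x * (((N:ℝ)^2/2) * x^2 * Real.exp (N*x)) := by
      have h0 : (0:ℝ) ≤ 1 + x := by linarith
      calc (1+x)*((1+x)^N - 1 - N*x) ≤ (1+x) * (((N:ℝ)^2/2) * x^2 * Real.exp (N*x)) :=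
            mul_le_mul_of_nonneg_left ih h0
        _ ≤ Real.exp x * (((N:ℝ)^2/2) * x^2 * Real.exp (N*x)) := by
            apply mul_le_mul_of_nonneg_right h1x; positivity
    have step2 : Real.exp x * (((N:ℝ)^2/2) * x^2 * Real.exp (N*x)) + N*x^2
        ≤ (((N:ℕ)+1:ℝ)^2/2) * x^2 * Real.exp ((N+1:ℕ)*x) := by
      have : Real.exp x * (((N:ℝ)^2/2) * x^2 * Real.exp (N*x))
          = ((N:ℝ)^2/2) * x^2 * Real.exp ((N+1:ℕ)*x) := by
        rw [← hexp]; ring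
      rw [this]
      have hA : (0:ℝ) ≤ (N:ℝ) * (x^2 * (Real.exp ((N+1:ℕ)*x) - 1)) :=
        mul_nonneg (Nat.cast_nonneg N) (mul_nonneg (sq_nonneg x) (by linarith))
      have hB : (0:ℝ) ≤ x^2 * Real.exp ((N+1:ℕ)*x) :=
        mul_nonneg (sq_nonneg x) (by linarith)
      nlinarith [hA, hB]
    push_cast at step2 ⊢
    linarith

/-- Poincaré/Bonferroni bound of Appendix 1. With `V_k = Z_k ∩ W_k`, the `Z`
and `W` parts independent (expressed by the product formula for intersections), `P(W_k) =
e^{-F}`, and `P(⋂ Z_{k_i}) ≤ e^{T-E} e^{-ℓT}` for any `ℓ ≥ 2` of them, the deviation of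
`P(⋃ V_k)` from `∑ P(V_k)` is bounded by
`e^{T-E}((1+e^{-(F+T)})^N - 1 - N e^{-(F+T)}) ≤ (N²/2) e^{T-E} e^{-2(F+T)} e^{N e^{-(F+T)}}`. -/
theorem inclusion_exclusion_residual {Ω : Type*} [MeasurableSpace Ω] (P : Measure Ω)
    [IsProbabilityMeasure P] (N : ℕ) (V Z W : Fin N → Set Ω)
    (hVm : ∀ k, MeasurableSet (V k)) (hZm : ∀ k, MeasurableSet (Z k))
    (hWm : ∀ k, MeasurableSet (W k))
    (hVZW : ∀ k, V k = Z k ∩ W k)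
    (E T F : ℝ) (hT : 0 ≤ T) (hTE : T ≤ E) (hF : 0 ≤ F)
    (hindep : ∀ s : Finset (Fin N), 2 ≤ s.card →
      (P (⋂ k ∈ s, V k)).toReal
        = (P (⋂ k ∈ s, Z k)).toReal * ∏ k ∈ s, (P (W k)).toReal)
    (hZ : ∀ s : Finset (Fin N), 2 ≤ s.card →
      (P (⋂ k ∈ s, Z k)).toReal ≤ Real.exp (T - E) * Real.exp (-(s.card : ℝ) * T))
    (hW : ∀ k, (P (W k)).toReal = Real.exp (-F)) :
    |(P (⋃ k, V k)).toReal - ∑ k, (P (V k)).toReal|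
      ≤ Real.exp (T - E) *
        ((1 + Real.exp (-(F+T)))^N - 1 - N * Real.exp (-(F+T))) ∧
    Real.exp (T - E) * ((1 + Real.exp (-(F+T)))^N - 1 - N * Real.exp (-(F+T)))
      ≤ (N^2/2) * Real.exp (T - E) * Real.exp (-2*(F+T))
          * Real.exp (N * Real.exp (-(F+T))) := by
  set x := Real.exp (-(F+T)) with hxdef
  set c := Real.exp (T-E) with hcdef
  have hx : (0:ℝ) ≤ x := (Real.exp_pos _).le
  have hc : (0:ℝ) ≤ c := (Real.exp_pos _).le
  have hx2 : Real.exp (-(2:ℝ)*T) * Real.exp (-F)^2 = x^2 := by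
    rw [hxdef, pow_two, pow_two, ← Real.exp_add, ← Real.exp_add, ← Real.exp_add]
    ring_nf
  have hpairterm : ∀ t ∈ (Finset.univ : Finset (Fin N)).powersetCard 2,
      (P (⋂ k ∈ t, V k)).toReal ≤ c * x^2 := by
    intro t ht
    have hcard : t.card = 2 := (Finset.mem_powersetCard.1 ht).2
    have h2 : 2 ≤ t.card := hcard.ge
    rw [hindep t h2]
    have hWprod : ∏ k ∈ t, (P (W k)).toReal = Real.exp (-F) ^ 2 := by
      rw [Finset.prod_congr rfl (fun k _ => hW k), Finset.prod_const, hcard]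
    rw [hWprod]
    have hz := hZ t h2
    rw [hcard] at hz
    have hz' : (P (⋂ k ∈ t, Z k)).toReal ≤ c * Real.exp (-(2:ℝ)*T) := by
      push_cast at hz; exact hz
    calc (P (⋂ k ∈ t, Z k)).toReal * Real.exp (-F)^2
        ≤ (c * Real.exp (-(2:ℝ) * T)) * Real.exp (-F)^2 :=
          mul_le_mul_of_nonneg_right hz' (by positivity)
      _ = c * x^2 := by rw [mul_assoc, hx2]
  set S := ∑ t ∈ (Finset.univ : Finset (Fin N)).powersetCard 2, (P (⋂ k ∈ t, V k)).toReal with hSdef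
  have hS0 : 0 ≤ S := Finset.sum_nonneg fun _ _ => ENNReal.toReal_nonneg
  have hScard : ((Finset.univ : Finset (Fin N)).powersetCard 2).card = N.choose 2 := by
    rw [Finset.card_powersetCard, Finset.card_univ, Fintype.card_fin]
  have hS : S ≤ (N.choose 2 : ℝ) * (c * x^2) := by
    calc S ≤ ((Finset.univ : Finset (Fin N)).powersetCard 2).card • (c * x^2) :=
          Finset.sum_le_card_nsmul _ _ _ hpairterm
      _ = (N.choose 2 : ℝ) * (c * x^2) := by rw [hScard, nsmul_eq_mul]
  have hfin : ∀ s : Set Ω, P s ≠ ⊤ := fun s => measure_ne_top P s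
  have hsumfin : ∑ k, P (V k) ≠ ⊤ := by
    refine (ENNReal.sum_lt_top.2 fun k _ => ?_).ne
    exact measure_lt_top P _
  have hSsumfin : ∑ t ∈ (Finset.univ : Finset (Fin N)).powersetCard 2, P (⋂ k ∈ t, V k) ≠ ⊤ := by
    refine (ENNReal.sum_lt_top.2 fun t _ => ?_).ne
    exact measure_lt_top P _
  have hsum_toReal : (∑ k, P (V k)).toReal = ∑ k, (P (V k)).toReal :=
    ENNReal.toReal_sum fun k _ => hfin _
  have hup : (P (⋃ k, V k)).toReal ≤ ∑ k, (P (V k)).toReal := by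
    rw [← hsum_toReal]
    exact ENNReal.toReal_mono hsumfin (measure_iUnion_fintype_le P V)
  have hbiu : ⋃ k ∈ (Finset.univ : Finset (Fin N)), V k = ⋃ k, V k := by simp
  have hlow : ∑ k, (P (V k)).toReal ≤ (P (⋃ k, V k)).toReal + S := by
    have h := bonferroni_aux P V hVm Finset.univ
    rw [hbiu] at h
    have h' := ENNReal.toReal_mono (by
      exact ENNReal.add_ne_top.2 ⟨hfin _, hSsumfin⟩) h
    rw [ENNReal.toReal_add (hfin _) hSsumfin, hsum_toReal,
      ENNReal.toReal_sum (fun t _ => hfin _)] at h'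
    exact h'
  have hSbound : S ≤ c * ((1+x)^N - 1 - N*x) := by
    calc S ≤ (N.choose 2 : ℝ) * (c * x^2) := hS
      _ = c * ((N.choose 2 : ℝ) * x^2) := by ring
      _ ≤ c * ((1+x)^N - 1 - N*x) :=
          mul_le_mul_of_nonneg_left (choose_two_le_pow N hx) hc
  constructor
  · rw [abs_le]
    constructor
    · linarith
    · have : (P (⋃ k, V k)).toReal - ∑ k, (P (V k)).toReal ≤ 0 := by linarith
      have hpos : 0 ≤ c * ((1+x)^N - 1 - N*x) := le_trans hS0 hSbound
      linarith
  · have hpow := pow_sub_le_exp N hx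
    have hx2' : x^2 = Real.exp (-2*(F+T)) := by
      rw [hxdef, pow_two, ← Real.exp_add]; ring_nf
    calc c * ((1+x)^N - 1 - N*x) ≤ c * (((N:ℝ)^2/2) * x^2 * Real.exp (N*x)) :=
          mul_le_mul_of_nonneg_left hpow hc
      _ = ((N:ℝ)^2/2) * c * Real.exp (-2*(F+T)) * Real.exp (N*x) := by rw [← hx2']; ring
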